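/- For all α ≥ 2 and A > 0, the unit ball B = {(z,t) ∈ ℝ^{2d} × ℝ : |z|^α + A|t|^{α/2} ≤ 1} is a convex subset of ℝ^{2d+1}. -/
import Mathlib

open Set

lemma aux_norm_rpow {E : Type*} [SeminormedAddCommGroup E] [NormedSpace ℝ E] {p : ℝ}
    (hp : 1 ≤ p) : ConvexOn ℝ univ fun x : E => ‖x‖ ^ p := by
  refine ⟨convex_univ, fun x _ y _ a b ha hb hab => ?_⟩
  calc ‖a • x + b • y‖ ^ p ≤ (a * ‖x‖ + b * ‖y‖) ^ p := by
        apply Real.rpow_le_rpow (norm_nonneg _) _ (by linarith)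
        calc ‖a • x + b • y‖ ≤ ‖a • x‖ + ‖b • y‖ := norm_add_le _ _
          _ = a * ‖x‖ + b * ‖y‖ := by
              rw [norm_smul, norm_smul, Real.norm_eq_abs, Real.norm_eq_abs,
                abs_of_nonneg ha, abs_of_nonneg hb]
    _ ≤ a * ‖x‖ ^ p + b * ‖y‖ ^ p :=
        (convexOn_rpow hp).2 (mem_Ici.mpr (norm_nonneg x)) (mem_Ici.mpr (norm_nonneg y))
          ha hb hab

theorem stmt0 (d : ℕ) (α A : ℝ) (hα : 2 ≤ α) (hA : 0 < A) :
    Convex ℝ {p : EuclideanSpace ℝ (Fin (2*d)) × ℝ |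
      ‖p.1‖ ^ α + A * |p.2| ^ (α/2) ≤ 1} := by
  have h1 : ConvexOn ℝ univ fun p : EuclideanSpace ℝ (Fin (2*d)) × ℝ => ‖p.1‖ ^ α :=
    (aux_norm_rpow (by linarith)).comp_linearMap
      (LinearMap.fst ℝ (EuclideanSpace ℝ (Fin (2*d))) ℝ)
  have h2 : ConvexOn ℝ univ fun p : EuclideanSpace ℝ (Fin (2*d)) × ℝ =>
      A * |p.2| ^ (α/2) := by
    have := ((aux_norm_rpow (E := ℝ) (p := α/2) (by linarith)).comp_linearMap
      (LinearMap.snd ℝ (EuclideanSpace ℝ (Fin (2*d))) ℝ)).smul hA.le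
    simpa [Real.norm_eq_abs, smul_eq_mul, Function.comp] using this
  have h := (h1.add h2).convex_le 1
  simpa using h
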